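/- Let B be a square substochastic matrix that is block upper triangular with square diagonal blocks B_11, B_22, …, B_rr, each of which is either irreducible or a 1×1 zero matrix (the normal form). Then B is convergent (B^k → 0 as k → ∞) if and only if Ĵ(B_ii) is nonempty for every i ∈ {1, …, r}. -/

import Mathlib

open Matrix Filter Finset

/-- A substochastic matrix: nonnegative entries, row sums at most one. -/
def IsSubstochastic {m n : Type*} [Fintype n] (B : Matrix m n ℝ) : Prop :=
  (∀ i j, 0 ≤ B i j) ∧ ∀ i, ∑ j, B i j ≤ 1

/-- Ĵ(B): the set of rows with row-sum strictly less than one. -/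
def Jhat {m n : Type*} [Fintype n] (B : Matrix m n ℝ) : Set m :=
  {i | ∑ j, B i j < 1}

/-- There is a walk of length `ℓ` (a nonempty sequence of `ℓ` consecutive edges) in the
digraph of `A` (edge `i → j` iff `A i j ≠ 0`) starting at `i` and ending in `S`. -/
def IsWalkTo {V : Type*} (A : Matrix V V ℝ) (i : V) (S : Set V) (ℓ : ℕ) : Prop :=
  1 ≤ ℓ ∧ ∃ w : ℕ → V, w 0 = i ∧ (∀ k < ℓ, A (w k) (w (k + 1)) ≠ 0) ∧ w ℓ ∈ S

/-- The index of contraction `ĉon B ∈ ℕ∞`: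
`max(0, sup_{i ∉ Ĵ(B)} inf_{p ∈ P̂ᵢ(B)} |p|)` with `inf ∅ = ∞`, `sup ∅ = -∞`
(in `ℕ∞` the empty supremum is `0`, matching `max(0, -∞) = 0`). -/
noncomputable def conHat {V : Type*} [Fintype V] (B : Matrix V V ℝ) : ℕ∞ :=
  ⨆ i ∈ (Jhat B)ᶜ, ⨅ ℓ ∈ {ℓ : ℕ | IsWalkTo B i (Jhat B) ℓ}, (ℓ : ℕ∞)

/-- The maximum absolute row-sum norm `‖·‖_∞`. -/
noncomputable def rowSumNorm {m n : Type*} [Fintype n] (B : Matrix m n ℝ) : ℝ :=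
  ⨆ i, ∑ j, |B i j|

/-- `B` is convergent: `Bᵏ → 0` as `k → ∞`. -/
def IsConvergent {V : Type*} [Fintype V] [DecidableEq V] (B : Matrix V V ℝ) : Prop :=
  Tendsto (fun k : ℕ => B ^ k) atTop (nhds 0)

/-- `B` is irreducible: its digraph is strongly connected, i.e. for every pair of
vertices `i, j` there is a walk from `i` to `j`. -/
def IsIrreducibleMat {V : Type*} (B : Matrix V V ℝ) : Prop :=
  ∀ i j : V, ∃ ℓ : ℕ, 1 ≤ ℓ ∧
    ∃ w : ℕ → V, w 0 = i ∧ w ℓ = j ∧ ∀ k < ℓ, B (w k) (w (k + 1)) ≠ 0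


section Aux
variable {V : Type*} [Fintype V] [DecidableEq V]

noncomputable def rsum (M : Matrix V V ℝ) (k : ℕ) (i : V) : ℝ := ∑ j, (M ^ k) i j

lemma rsum_zero (M : Matrix V V ℝ) (i : V) : rsum M 0 i = 1 := by
  simp [rsum, Matrix.one_apply]

lemma rsum_one (M : Matrix V V ℝ) (i : V) : rsum M 1 i = ∑ j, M i j := by
  simp [rsum]

lemma rsum_add (M : Matrix V V ℝ) (m k : ℕ) (i : V) :
    rsum M (m + k) i = ∑ j, (M ^ m) i j * rsum M k j := by
  simp only [rsum, pow_add, Matrix.mul_apply]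
  rw [Finset.sum_comm]
  simp [Finset.mul_sum]

lemma rsum_succ (M : Matrix V V ℝ) (k : ℕ) (i : V) :
    rsum M (k + 1) i = ∑ j, M i j * rsum M k j := by
  rw [add_comm, rsum_add, pow_one]

lemma pow_entry_nonneg {M : Matrix V V ℝ} (hM : IsSubstochastic M) (k : ℕ) (i j : V) :
    0 ≤ (M ^ k) i j := by
  induction k generalizing i j with
  | zero => by_cases h : i = j <;> simp [Matrix.one_apply, h]
  | succ n ih =>
    rw [pow_succ, Matrix.mul_apply]
    exact Finset.sum_nonneg fun l _ => mul_nonneg (ih i l) (hM.1 l j)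

lemma rsum_nonneg {M : Matrix V V ℝ} (hM : IsSubstochastic M) (k : ℕ) (i : V) :
    0 ≤ rsum M k i :=
  Finset.sum_nonneg fun j _ => pow_entry_nonneg hM k i j

lemma rsum_le_one {M : Matrix V V ℝ} (hM : IsSubstochastic M) (k : ℕ) (i : V) :
    rsum M k i ≤ 1 := by
  induction k generalizing i with
  | zero => rw [rsum_zero]
  | succ n ih =>
    rw [rsum_succ]
    calc ∑ j, M i j * rsum M n j ≤ ∑ j, M i j * 1 :=
          Finset.sum_le_sum fun j _ => mul_le_mul_of_nonneg_left (ih j) (hM.1 i j)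
      _ ≤ 1 := by simpa using hM.2 i

lemma rsum_succ_le {M : Matrix V V ℝ} (hM : IsSubstochastic M) (k : ℕ) (i : V) :
    rsum M (k + 1) i ≤ rsum M k i := by
  induction k generalizing i with
  | zero => rw [rsum_zero]; exact rsum_le_one hM 1 i
  | succ n ih =>
    rw [rsum_succ M (n + 1), rsum_succ M n]
    exact Finset.sum_le_sum fun j _ => mul_le_mul_of_nonneg_left (ih j) (hM.1 i j)

lemma rsum_anti {M : Matrix V V ℝ} (hM : IsSubstochastic M) {k m : ℕ} (h : k ≤ m) (i : V) :
    rsum M m i ≤ rsum M k i :=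
  antitone_nat_of_succ_le (f := fun k => rsum M k i) (fun n => rsum_succ_le hM n i) h

lemma rsum_edge {M : Matrix V V ℝ} (hM : IsSubstochastic M) {i j : V} {k : ℕ}
    (hij : M i j ≠ 0) (hj : rsum M k j < 1) : rsum M (k + 1) i < 1 := by
  rw [rsum_succ]
  have hpos : 0 < M i j := lt_of_le_of_ne (hM.1 i j) (Ne.symm hij)
  calc ∑ j', M i j' * rsum M k j' < ∑ j', M i j' * 1 := by
        apply Finset.sum_lt_sum
        · exact fun l _ => mul_le_mul_of_nonneg_left (rsum_le_one hM k l) (hM.1 i l)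
        · exact ⟨j, Finset.mem_univ j, mul_lt_mul_of_pos_left hj hpos⟩
    _ ≤ 1 := by simpa using hM.2 i

lemma rsum_walk {M : Matrix V V ℝ} (hM : IsSubstochastic M) {l : ℕ} (w : ℕ → V)
    (hw : ∀ t < l, M (w t) (w (t + 1)) ≠ 0) {k : ℕ} (hend : rsum M k (w l) < 1) :
    rsum M (k + l) (w 0) < 1 := by
  induction l generalizing w with
  | zero => simpa using hend
  | succ n ih =>
    have h1 : rsum M (k + n) (w 1) < 1 :=
      ih (fun t => w (t + 1)) (fun t ht => hw (t + 1) (by omega)) hend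
    have := rsum_edge hM (hw 0 (by omega)) h1
    simpa [← add_assoc] using this

lemma isConvergent_of_rsum {M : Matrix V V ℝ} (hM : IsSubstochastic M)
    (h : ∀ i, ∃ k, rsum M k i < 1) : IsConvergent M := by
  cases isEmpty_or_nonempty V with
  | inl hV =>
    have : ∀ k : ℕ, M ^ k = 0 := fun k => by ext i j; exact (hV.false i).elim
    simp only [IsConvergent, this]
    exact tendsto_const_nhds
  | inr hV =>
    choose kk hkk using h
    set N := Finset.univ.sup kk with hNdef
    have hkN : ∀ i, kk i ≤ N := fun i => Finset.le_sup (Finset.mem_univ i)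
    have hN : ∀ i, rsum M N i < 1 := fun i =>
      lt_of_le_of_lt (rsum_anti hM (hkN i) i) (hkk i)
    have hN1 : 0 < N := by
      obtain ⟨i0⟩ := hV
      have : kk i0 ≠ 0 := fun h0 => by
        have := hkk i0; rw [h0, rsum_zero] at this; exact lt_irrefl 1 this
      have := hkN i0; omega
    set c := Finset.univ.sup' Finset.univ_nonempty (rsum M N) with hcdef
    have hc1 : c < 1 := (Finset.sup'_lt_iff _).mpr fun i _ => hN i
    have hle : ∀ i, rsum M N i ≤ c := fun i => Finset.le_sup' _ (Finset.mem_univ i)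
    have hc0 : 0 ≤ c := by
      obtain ⟨i0⟩ := hV
      exact le_trans (rsum_nonneg hM N i0) (hle i0)
    have hq : ∀ q i, rsum M (q * N) i ≤ c ^ q := by
      intro q
      induction q with
      | zero => intro i; simp [rsum_zero]
      | succ q ih =>
        intro i
        have e : (q + 1) * N = N + q * N := by ring
        rw [e, rsum_add]
        calc ∑ j, (M ^ N) i j * rsum M (q * N) j
            ≤ ∑ j, (M ^ N) i j * c ^ q := Finset.sum_le_sum fun j _ =>
              mul_le_mul_of_nonneg_left (ih j) (pow_entry_nonneg hM N i j)
          _ = rsum M N i * c ^ q := by rw [rsum, Finset.sum_mul]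
          _ ≤ c * c ^ q := mul_le_mul_of_nonneg_right (hle i) (pow_nonneg hc0 q)
          _ = c ^ (q + 1) := by ring
    rw [IsConvergent]; refine tendsto_pi_nhds.mpr ?_
    intro i
    rw [tendsto_pi_nhds]
    intro j
    simp only [Matrix.zero_apply]
    have hub : ∀ m : ℕ, (M ^ m) i j ≤ c ^ (m / N) := by
      intro m
      calc (M ^ m) i j ≤ rsum M m i :=
            Finset.single_le_sum (fun l _ => pow_entry_nonneg hM m i l) (Finset.mem_univ j)
        _ ≤ rsum M (m / N * N) i := rsum_anti hM (Nat.div_mul_le_self m N) i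
        _ ≤ c ^ (m / N) := hq _ i
    have hdiv : Tendsto (fun m : ℕ => m / N) atTop atTop :=
      tendsto_atTop_atTop.mpr fun b => ⟨b * N, fun m hm => (Nat.le_div_iff_mul_le hN1).mpr hm⟩
    have hpow : Tendsto (fun m : ℕ => c ^ (m / N)) atTop (nhds 0) :=
      (tendsto_pow_atTop_nhds_zero_of_lt_one hc0 hc1).comp hdiv
    exact squeeze_zero (fun m => pow_entry_nonneg hM m i j) hub hpow

end Aux

/-- The `i`-th diagonal block of a matrix indexed by `Σ i, Fin (nsz i)`. -/
def diagBlock {r : ℕ} {nsz : Fin r → ℕ}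
    (M : Matrix (Σ i, Fin (nsz i)) (Σ i, Fin (nsz i)) ℝ) (i : Fin r) :
    Matrix (Fin (nsz i)) (Fin (nsz i)) ℝ :=
  Matrix.of fun a b => M ⟨i, a⟩ ⟨i, b⟩

theorem stmt5 {r : ℕ} (nsz : Fin (r + 1) → ℕ) (hnsz : ∀ i, 0 < nsz i)
    (M : Matrix (Σ i, Fin (nsz i)) (Σ i, Fin (nsz i)) ℝ)
    (hM : IsSubstochastic M)
    (htri : ∀ a b : Σ i, Fin (nsz i), b.1 < a.1 → M a b = 0)
    (hblocks : ∀ i, IsIrreducibleMat (diagBlock M i) ∨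
      (nsz i = 1 ∧ diagBlock M i = 0)) :
    IsConvergent M ↔ ∀ i, (Jhat (diagBlock M i)).Nonempty := by
  constructor
  · -- forward direction
    intro hconv i
    by_contra hne
    rw [Set.not_nonempty_iff_eq_empty] at hne
    have hge : ∀ a : Fin (nsz i), 1 ≤ ∑ x, M ⟨i, a⟩ ⟨i, x⟩ := by
      intro a
      by_contra hlt
      push_neg at hlt
      have : a ∈ Jhat (diagBlock M i) := by simpa [Jhat, diagBlock] using hlt
      rw [hne] at this
      exact this
    -- define block column sums
    have hsplit : ∀ a : Fin (nsz i),
        rsum M 1 ⟨i, a⟩ = ∑ c, ∑ x, M ⟨i, a⟩ ⟨c, x⟩ := by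
      intro a
      rw [rsum_one, ← Finset.univ_sigma_univ, Finset.sum_sigma]
    have hgle : ∀ (a : Fin (nsz i)) (c : Fin (r + 1)), c ≠ i →
        ∑ x, M ⟨i, a⟩ ⟨c, x⟩ ≤ 0 := by
      intro a c hc
      have h1 : rsum M 1 ⟨i, a⟩ ≤ 1 := rsum_le_one hM 1 _
      rw [hsplit a] at h1
      have herase := Finset.add_sum_erase Finset.univ
        (fun c => ∑ x, M ⟨i, a⟩ ⟨c, x⟩) (Finset.mem_univ i)
      have hsingle : ∑ x, M ⟨i, a⟩ ⟨c, x⟩ ≤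
          ∑ c' ∈ Finset.univ.erase i, ∑ x, M ⟨i, a⟩ ⟨c', x⟩ :=
        Finset.single_le_sum (f := fun c' => ∑ x, M ⟨i, a⟩ ⟨c', x⟩)
          (fun c' _ => Finset.sum_nonneg fun x _ => hM.1 _ _)
          (Finset.mem_erase.mpr ⟨hc, Finset.mem_univ c⟩)
      have := hge a
      linarith
    have hzero : ∀ (a : Fin (nsz i)) (c : Fin (r + 1)) (x : Fin (nsz c)), c ≠ i →
        M ⟨i, a⟩ ⟨c, x⟩ = 0 := by
      intro a c x hc
      have h1 : M ⟨i, a⟩ ⟨c, x⟩ ≤ ∑ x', M ⟨i, a⟩ ⟨c, x'⟩ :=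
        Finset.single_le_sum (fun x' _ => hM.1 _ _) (Finset.mem_univ x)
      have h2 := hgle a c hc
      have h3 := hM.1 (⟨i, a⟩ : Σ c, Fin (nsz c)) ⟨c, x⟩
      linarith
    have hgeq : ∀ a : Fin (nsz i), ∑ x, M ⟨i, a⟩ ⟨i, x⟩ = 1 := by
      intro a
      have h1 : rsum M 1 ⟨i, a⟩ ≤ 1 := rsum_le_one hM 1 _
      rw [hsplit a] at h1
      have h2 : ∑ x, M ⟨i, a⟩ ⟨i, x⟩ ≤ ∑ c, ∑ x, M ⟨i, a⟩ ⟨c, x⟩ :=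
        Finset.single_le_sum (f := fun c => ∑ x, M ⟨i, a⟩ ⟨c, x⟩)
          (fun c' _ => Finset.sum_nonneg fun x _ => hM.1 _ _) (Finset.mem_univ i)
      have := hge a
      linarith
    have hrs : ∀ (k : ℕ) (a : Fin (nsz i)), rsum M k ⟨i, a⟩ = 1 := by
      intro k
      induction k with
      | zero => intro a; exact rsum_zero M _
      | succ n ih =>
        intro a
        rw [rsum_succ, ← Finset.univ_sigma_univ, Finset.sum_sigma]
        rw [Finset.sum_eq_single_of_mem i (Finset.mem_univ i)
          (fun c _ hc => Finset.sum_eq_zero fun x _ => by rw [hzero a c x hc, zero_mul])]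
        calc ∑ x, M ⟨i, a⟩ ⟨i, x⟩ * rsum M n ⟨i, x⟩
            = ∑ x, M ⟨i, a⟩ ⟨i, x⟩ := by
              apply Finset.sum_congr rfl
              intro x _
              rw [ih x, mul_one]
          _ = 1 := hgeq a
    -- contradiction with convergence
    set a : Fin (nsz i) := ⟨0, hnsz i⟩
    have hten : Tendsto (fun k => rsum M k ⟨i, a⟩) atTop (nhds 0) := by
      have h1 := tendsto_pi_nhds.mp hconv ⟨i, a⟩
      have h2 : ∀ j, Tendsto (fun k => (M ^ k) ⟨i, a⟩ j) atTop (nhds 0) := by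
        intro j
        have := tendsto_pi_nhds.mp h1 j
        exact this
      have := tendsto_finset_sum Finset.univ
        (fun j _ => h2 j)
      simpa [rsum] using this
    have h10 : Tendsto (fun _ : ℕ => (1 : ℝ)) atTop (nhds 0) := by
      have he : (fun _ : ℕ => (1 : ℝ)) = fun k => rsum M k ⟨i, a⟩ :=
        funext fun k => (hrs k a).symm
      rw [he]
      exact hten
    have : (0 : ℝ) = 1 := tendsto_nhds_unique h10 tendsto_const_nhds
    norm_num at this
  · -- backward direction
    intro hJ
    apply isConvergent_of_rsum hM
    have key : ∀ (n : ℕ) (i : Fin (r + 1)), r - (i : ℕ) < n →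
        ∀ a : Fin (nsz i), ∃ k, rsum M k ⟨i, a⟩ < 1 := by
      intro n
      induction n with
      | zero => intro i hi; omega
      | succ n ih =>
        intro i hi a
        obtain ⟨a0, ha0⟩ := hJ i
        have ha0' : ∑ x, M ⟨i, a0⟩ ⟨i, x⟩ < 1 := by simpa [Jhat, diagBlock] using ha0
        have h0 : ∃ k, rsum M k ⟨i, a0⟩ < 1 := by
          by_cases h1 : rsum M 1 ⟨i, a0⟩ < 1
          · exact ⟨1, h1⟩
          · push_neg at h1
            have hsplit : rsum M 1 ⟨i, a0⟩ = ∑ c, ∑ x, M ⟨i, a0⟩ ⟨c, x⟩ := by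
              rw [rsum_one, ← Finset.univ_sigma_univ, Finset.sum_sigma]
            have hex : ∃ c, c ≠ i ∧ ∃ x, M ⟨i, a0⟩ ⟨c, x⟩ ≠ 0 := by
              by_contra hno
              push_neg at hno
              have heq : rsum M 1 ⟨i, a0⟩ = ∑ x, M ⟨i, a0⟩ ⟨i, x⟩ := by
                rw [hsplit]
                exact Finset.sum_eq_single_of_mem i (Finset.mem_univ i)
                  (fun c _ hc => Finset.sum_eq_zero fun x _ => hno c hc x)
              linarith
            obtain ⟨c, hc, x, hx⟩ := hex
            have hlt : (i : ℕ) < (c : ℕ) := by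
              rcases lt_trichotomy ((c : ℕ)) ((i : ℕ)) with h | h | h
              · exact absurd (htri ⟨i, a0⟩ ⟨c, x⟩ h) hx
              · exact absurd (Fin.ext h) hc
              · exact h
            have hcr := c.isLt
            obtain ⟨k, hk⟩ := ih c (by omega) x
            exact ⟨k + 1, rsum_edge hM hx hk⟩
        obtain ⟨k0, hk0⟩ := h0
        rcases hblocks i with hirr | ⟨h1sz, _⟩
        · obtain ⟨l, hl1, w, hw0, hwl, hwe⟩ := hirr a a0
          have hwalk := rsum_walk hM (fun t => (⟨i, w t⟩ : Σ c, Fin (nsz c)))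
            (fun t ht => by simpa [diagBlock] using hwe t ht)
            (k := k0) (by simpa [hwl] using hk0)
          exact ⟨k0 + l, by simpa [hw0] using hwalk⟩
        · have haa0 : a = a0 := by
            have h1' := a.isLt
            have h2' := a0.isLt
            apply Fin.ext
            omega
          exact ⟨k0, haa0 ▸ hk0⟩
    rintro ⟨i, a⟩
    exact key (r + 1) i (by omega) a
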